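/- Let q be a word satisfying condition C3 (whenever q = ℓ·R·u·R·r for a letter R and words ℓ, u, r, q is a factor of ℓ·R·u·R·u·R·r). Then every episode of q is left-repeating or right-repeating: if q = ℓ·R·u·R·r where R does not occur in u, then either ℓ is a suffix of (R·u)^{|ℓ|}, or r is a prefix of (u·R)^{|r|}. -/

import Mathlib

/-- k-fold concatenation of a word with itself. -/
def wpow {α : Type*} (w : List α) : ℕ → List α
  | 0 => []
  | k + 1 => w ++ wpow w k


lemma wpow_comm {α : Type*} (w : List α) (n : ℕ) :
    wpow w n ++ w = w ++ wpow w n := by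
  induction n with
  | zero => simp [wpow]
  | succ n ih => simp only [wpow, List.append_assoc, ih]

lemma wpow_reverse {α : Type*} (w : List α) (n : ℕ) :
    (wpow w n).reverse = wpow w.reverse n := by
  induction n with
  | zero => simp [wpow]
  | succ n ih => simp only [wpow, List.reverse_append, ih, wpow_comm]

lemma prefix_wpow_aux {α : Type*} (w : List α) :
    ∀ (n : ℕ) (r : List α), r <+: w ++ r → r.length ≤ n * w.length → r <+: wpow w n := by
  intro n
  induction n with
  | zero =>
    intro r h hn
    simp only [Nat.zero_mul, Nat.le_zero, List.length_eq_zero_iff] at hn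
    subst hn
    simp [wpow]
  | succ n ih =>
    intro r h hn
    show r <+: w ++ wpow w n
    by_cases hle : r.length ≤ w.length
    · have hr : r = w.take r.length := by
        have := List.prefix_iff_eq_take.mp h
        rwa [List.take_append_of_le_length hle] at this
      rw [hr]
      exact (List.take_prefix _ _).trans (List.prefix_append w (wpow w n))
    · have hw : w <+: r :=
        List.prefix_of_prefix_length_le (List.prefix_append w r) h (le_of_not_ge hle)
      obtain ⟨r', rfl⟩ := hw
      have h' : r' <+: w ++ r' := by
        obtain ⟨t, ht⟩ := h
        refine ⟨t, ?_⟩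
        have : w ++ (r' ++ t) = w ++ (w ++ r') := by
          simpa [List.append_assoc] using ht
        exact List.append_cancel_left this
      have hn' : r'.length ≤ n * w.length := by
        simp only [List.length_append, Nat.succ_mul] at hn ⊢
        omega
      obtain ⟨t, ht⟩ := ih r' h' hn'
      exact ⟨t, by rw [List.append_assoc, ht]⟩

lemma prefix_wpow {α : Type*} (w r : List α) (hw : w ≠ [])
    (h : r <+: w ++ r) : r <+: wpow w r.length := by
  apply prefix_wpow_aux w r.length r h
  have : 1 ≤ w.length := List.length_pos_iff.mpr hw
  calc r.length = r.length * 1 := (Nat.mul_one _).symm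
    _ ≤ r.length * w.length := Nat.mul_le_mul_left _ this

lemma suffix_wpow {α : Type*} (w l : List α) (hw : w ≠ [])
    (h : l <:+ l ++ w) : l <:+ wpow w l.length := by
  rw [← List.reverse_prefix] at h ⊢
  rw [List.reverse_append] at h
  rw [wpow_reverse, ← List.length_reverse (as := l)]
  apply prefix_wpow w.reverse l.reverse (by simpa using hw)
  simpa using h

/-- Condition C3: whenever `q = a·R·v·R·b`, `q` is a factor of `a·R·v·R·v·R·b`. -/
def CondC3 {α : Type*} (q : List α) : Prop :=
  ∀ (a v b : List α) (R : α), q = a ++ [R] ++ v ++ [R] ++ b →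
    q <:+: a ++ [R] ++ v ++ [R] ++ v ++ [R] ++ b

/-- Repeating lemma: in a word satisfying C3, every episode is left-repeating
or right-repeating. -/
theorem stmt_6 {α : Type*} (q : List α) (hC3 : CondC3 q)
    (l u r : List α) (R : α)
    (hq : q = l ++ [R] ++ u ++ [R] ++ r) (hep : R ∉ u) :
    l <:+ wpow ([R] ++ u) l.length ∨ r <+: wpow (u ++ [R]) r.length := by

  obtain ⟨x, y, hxy⟩ := hC3 l u r R hq
  subst hq
  have hlen : x.length + y.length = u.length + 1 := by
    have := congrArg List.length hxy
    simp only [List.length_append, List.length_cons, List.length_nil] at this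
    omega
  by_cases hx : x = []
  · subst hx
    right
    have h2 : r ++ y = (u ++ [R]) ++ r := by
      simpa [List.append_assoc] using hxy
    exact prefix_wpow (u ++ [R]) r (by simp) ⟨y, h2⟩
  · by_cases hy : y = []
    · subst hy
      left
      have h2 : (x ++ l) ++ ([R] ++ u ++ [R] ++ r) = (l ++ ([R] ++ u)) ++ ([R] ++ u ++ [R] ++ r) := by
        simpa [List.append_assoc] using hxy
      have h3 : x ++ l = l ++ ([R] ++ u) := List.append_cancel_right h2
      exact suffix_wpow ([R] ++ u) l (by simp) ⟨x, h3⟩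
    · exfalso
      have hx1 : 1 ≤ x.length := List.length_pos_iff.mpr hx
      have hy1 : 1 ≤ y.length := List.length_pos_iff.mpr hy
      have hxu : x.length ≤ u.length := by omega
      set p := x.length with hp
      have hu : u.take (p - 1) ++ u.drop (p - 1) = u := List.take_append_drop _ _
      have hlen1 : (u.take (p - 1)).length = p - 1 := by
        rw [List.length_take]; omega
      have hu₂ne : u.drop (p - 1) ≠ [] := by
        rw [← List.length_pos_iff, List.length_drop]; omega
      obtain ⟨c, u₂', hcu⟩ := List.exists_cons_of_ne_nil hu₂ne
      have h2 : (x ++ l) ++ ([R] ++ u ++ [R] ++ r ++ y)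
          = (l ++ [R] ++ u.take (p - 1)) ++ (u.drop (p - 1) ++ ([R] ++ u ++ [R] ++ r)) := by
        rw [show (l ++ [R] ++ u.take (p - 1)) ++ (u.drop (p - 1) ++ ([R] ++ u ++ [R] ++ r))
            = l ++ [R] ++ (u.take (p - 1) ++ u.drop (p - 1)) ++ ([R] ++ u ++ [R] ++ r) by
          simp only [List.append_assoc], hu]
        simpa [List.append_assoc] using hxy
      have hlen2 : (x ++ l).length = (l ++ [R] ++ u.take (p - 1)).length := by
        simp [hlen1]; omega
      have h3 := (List.append_inj h2 hlen2).2
      rw [hcu] at h3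
      have hc : R = c := by
        have := congrArg List.head? h3
        simpa using this
      apply hep
      rw [← hu, hcu, hc]
      simp
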